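/- Let h : [−Y₋, Y₊] → ℝ be continuous and nonnegative, and let ϑ : [−Y₋, Y₊] → ℝ be a C² function satisfying ϑ″(s) − ϑ(s) ≥ −h(s) on (−Y₋, Y₊). Suppose A₊, A₋ ≥ 0 satisfy ϑ(Y₊) ≤ A₊ and ϑ(−Y₋) ≤ A₋. Then for all s ∈ [−Y₋, Y₊], ϑ(s) ≤ A₊ e^{s−Y₊} + A₋ e^{−s−Y₋} + ½ ∫_{−Y₋}^{Y₊} e^{−|s−q|} h(q) dq. -/

import Mathlib

open Real

lemma max_principle_aux (a b : ℝ) (w w' w'' : ℝ → ℝ) (hab : a ≤ b)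
    (hwc : ContinuousOn w (Set.Icc a b))
    (hd1 : ∀ s ∈ Set.Ioo a b, HasDerivAt w (w' s) s)
    (hd2 : ∀ s ∈ Set.Ioo a b, HasDerivAt w' (w'' s) s)
    (hineq : ∀ s ∈ Set.Ioo a b, w s ≤ w'' s)
    (hwa : w a ≤ 0) (hwb : w b ≤ 0) : ∀ s ∈ Set.Icc a b, w s ≤ 0 := by
  obtain ⟨c, hcmem, hcmax⟩ := isCompact_Icc.exists_isMaxOn (Set.nonempty_Icc.2 hab) hwc
  by_cases hM : w c ≤ 0
  · exact fun s hs => le_trans (hcmax hs) hM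
  push_neg at hM
  exfalso
  have hca : c ≠ a := by rintro rfl; linarith
  have hcb : c ≠ b := by rintro rfl; linarith
  have hcoo : c ∈ Set.Ioo a b := ⟨lt_of_le_of_ne hcmem.1 (Ne.symm hca), lt_of_le_of_ne hcmem.2 hcb⟩
  -- w' c = 0
  have hloc : IsLocalMax w c := hcmax.isLocalMax (Icc_mem_nhds hcoo.1 hcoo.2)
  have hw'c : w' c = 0 := hloc.hasDerivAt_eq_zero (hd1 c hcoo)
  -- find δ
  have hcont : ContinuousAt w c := (hd1 c hcoo).continuousAt
  have hnhds : Set.Ioo a b ∩ w ⁻¹' Set.Ioi 0 ∈ nhds c := by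
    refine Filter.inter_mem (isOpen_Ioo.mem_nhds hcoo) ?_
    exact hcont (Ioi_mem_nhds hM)
  obtain ⟨δ, hδ, hball⟩ := Metric.mem_nhds_iff.1 hnhds
  set t := c + δ / 2 with ht
  have hct : c < t := by simp [ht]; linarith
  have hsub : Set.Icc c t ⊆ Set.Ioo a b ∩ w ⁻¹' Set.Ioi 0 := by
    intro x hx
    apply hball
    rw [Metric.mem_ball, Real.dist_eq, abs_of_nonneg (by linarith [hx.1])]
    have := hx.2
    simp only [ht] at this ⊢
    linarith
  have hsub1 : Set.Icc c t ⊆ Set.Ioo a b := fun x hx => (hsub hx).1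
  -- w' strictly monotone on Icc c t
  have hw'mono : StrictMonoOn w' (Set.Icc c t) := by
    apply strictMonoOn_of_hasDerivWithinAt_pos (convex_Icc c t)
      (fun x hx => (hd2 x (hsub1 hx)).continuousAt.continuousWithinAt)
      (fun x hx => ((hd2 x (hsub1 (interior_subset hx))).hasDerivWithinAt))
    intro x hx
    rw [interior_Icc] at hx
    have hxm : x ∈ Set.Icc c t := Set.Ioo_subset_Icc_self hx
    have : 0 < w x := (hsub hxm).2
    linarith [hineq x (hsub1 hxm)]
  have hw'pos : ∀ x ∈ Set.Ioo c t, 0 < w' x := by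
    intro x hx
    have := hw'mono (Set.left_mem_Icc.2 hct.le) (Set.Ioo_subset_Icc_self hx) hx.1
    rw [hw'c] at this; exact this
  have hwmono : StrictMonoOn w (Set.Icc c t) := by
    apply strictMonoOn_of_hasDerivWithinAt_pos (convex_Icc c t)
      (fun x hx => (hd1 x (hsub1 hx)).continuousAt.continuousWithinAt)
      (fun x hx => ((hd1 x (hsub1 (interior_subset hx))).hasDerivWithinAt))
    intro x hx
    rw [interior_Icc] at hx
    exact hw'pos x hx
  have hwt : w c < w t := hwmono (Set.left_mem_Icc.2 hct.le) (Set.right_mem_Icc.2 hct.le) hct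
  have htmem : t ∈ Set.Icc a b := Set.Ioo_subset_Icc_self (hsub1 (Set.right_mem_Icc.2 hct.le))
  exact absurd (hcmax htmem) (by simp; linarith)


/-- Maximum-principle comparison: if `ϑ` is `C²` on `[−Y₋, Y₊]` with `ϑ″ − ϑ ≥ −h` for a
continuous nonnegative `h`, and `A₊, A₋ ≥ 0` dominate the boundary values, then
`ϑ(s) ≤ A₊ e^{s−Y₊} + A₋ e^{−s−Y₋} + ½ ∫_{−Y₋}^{Y₊} e^{−|s−q|} h(q) dq` on `[−Y₋, Y₊]`. -/
theorem ode_comparison_collar (Ym Yp Ap Am : ℝ) (h th th' th'' : ℝ → ℝ)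
    (hY : -Ym ≤ Yp)
    (hhc : ContinuousOn h (Set.Icc (-Ym) Yp))
    (hhpos : ∀ q ∈ Set.Icc (-Ym) Yp, 0 ≤ h q)
    (hthc : ContinuousOn th (Set.Icc (-Ym) Yp))
    (hth'c : ContinuousOn th' (Set.Ioo (-Ym) Yp))
    (hth''c : ContinuousOn th'' (Set.Ioo (-Ym) Yp))
    (hd1 : ∀ s ∈ Set.Ioo (-Ym) Yp, HasDerivAt th (th' s) s)
    (hd2 : ∀ s ∈ Set.Ioo (-Ym) Yp, HasDerivAt th' (th'' s) s)
    (hineq : ∀ s ∈ Set.Ioo (-Ym) Yp, th'' s - th s ≥ -h s)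
    (hAp : 0 ≤ Ap) (hAm : 0 ≤ Am)
    (hbp : th Yp ≤ Ap) (hbm : th (-Ym) ≤ Am) :
    ∀ s ∈ Set.Icc (-Ym) Yp,
      th s ≤ Ap * Real.exp (s - Yp) + Am * Real.exp (-s - Ym) +
        (1 / 2) * ∫ q in (-Ym)..Yp, Real.exp (-|s - q|) * h q := by
  set a : ℝ := -Ym with ha_def
  set b : ℝ := Yp with hb_def
  set g1 : ℝ → ℝ := fun q => Real.exp q * h q with hg1_def
  set g2 : ℝ → ℝ := fun q => Real.exp (-q) * h q with hg2_def
  have hg1c : ContinuousOn g1 (Set.Icc a b) := (Real.continuous_exp.continuousOn).mul hhc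
  have hg2c : ContinuousOn g2 (Set.Icc a b) :=
    ((Real.continuous_exp.comp continuous_neg).continuousOn).mul hhc
  set H1 : ℝ → ℝ := fun s => ∫ q in a..s, g1 q with hH1_def
  set H2 : ℝ → ℝ := fun s => ∫ q in s..b, g2 q with hH2_def
  set F : ℝ → ℝ := fun s => Ap * Real.exp (s - b) + Am * Real.exp (-s + a) +
      (1/2) * (Real.exp (-s) * H1 s + Real.exp s * H2 s) with hF_def
  set F' : ℝ → ℝ := fun s => Ap * Real.exp (s - b) - Am * Real.exp (-s + a) +
      (1/2) * (-(Real.exp (-s)) * H1 s + Real.exp s * H2 s) with hF'_def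
  have huIcc : Set.uIcc a b = Set.Icc a b := Set.uIcc_of_le hY
  -- integrability of g1, g2 on subintervals of [a,b]
  have hint1 : ∀ u v, u ∈ Set.Icc a b → v ∈ Set.Icc a b → IntervalIntegrable g1 MeasureTheory.volume u v := by
    intro u v hu hv
    apply ContinuousOn.intervalIntegrable
    exact hg1c.mono ((Set.uIcc_subset_uIcc (by rw [huIcc]; exact hu) (by rw [huIcc]; exact hv)).trans huIcc.subset)
  have hint2 : ∀ u v, u ∈ Set.Icc a b → v ∈ Set.Icc a b → IntervalIntegrable g2 MeasureTheory.volume u v := by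
    intro u v hu hv
    apply ContinuousOn.intervalIntegrable
    exact hg2c.mono ((Set.uIcc_subset_uIcc (by rw [huIcc]; exact hu) (by rw [huIcc]; exact hv)).trans huIcc.subset)
  have hmemab : ∀ u, u ∈ Set.Icc a b → u ∈ Set.uIcc a b := fun u hu => by rw [huIcc]; exact hu
  -- derivatives of H1 H2 in the interior
  have hH1d : ∀ s ∈ Set.Ioo a b, HasDerivAt H1 (g1 s) s := by
    intro s hs
    have hnb : Set.Icc a b ∈ nhds s := Icc_mem_nhds hs.1 hs.2
    exact intervalIntegral.integral_hasDerivAt_right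
      (hint1 a s (Set.left_mem_Icc.2 hY) (Set.Ioo_subset_Icc_self hs))
      ⟨Set.Icc a b, hnb, hg1c.aestronglyMeasurable measurableSet_Icc⟩
      (hg1c.continuousAt hnb)
  have hH2d : ∀ s ∈ Set.Ioo a b, HasDerivAt H2 (-(g2 s)) s := by
    intro s hs
    have hnb : Set.Icc a b ∈ nhds s := Icc_mem_nhds hs.1 hs.2
    exact intervalIntegral.integral_hasDerivAt_left
      (hint2 s b (Set.Ioo_subset_Icc_self hs) (Set.right_mem_Icc.2 hY))
      ⟨Set.Icc a b, hnb, hg2c.aestronglyMeasurable measurableSet_Icc⟩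
      (hg2c.continuousAt hnb)
  -- derivative of F
  have hFd : ∀ s ∈ Set.Ioo a b, HasDerivAt F (F' s) s := by
    intro s hs
    have e1 : HasDerivAt (fun x : ℝ => Real.exp (-x)) (-(Real.exp (-s))) s := by
      simpa using ((hasDerivAt_id s).neg.exp)
    have e2 : HasDerivAt (fun x : ℝ => Real.exp x) (Real.exp s) s := Real.hasDerivAt_exp s
    have t1 : HasDerivAt (fun x : ℝ => Ap * Real.exp (x - b)) (Ap * Real.exp (s - b)) s := by
      simpa using (((hasDerivAt_id s).sub_const b).exp.const_mul Ap)
    have t2 : HasDerivAt (fun x : ℝ => Am * Real.exp (-x + a)) (-(Am * Real.exp (-s + a))) s := by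
      have := (((hasDerivAt_id s).neg.add_const a).exp.const_mul Am)
      refine this.congr_deriv ?_
      simp only [Pi.neg_apply, id_eq]
      ring
    have t3 : HasDerivAt (fun x : ℝ => Real.exp (-x) * H1 x)
        (-(Real.exp (-s)) * H1 s + Real.exp (-s) * g1 s) s := e1.mul (hH1d s hs)
    have t4 : HasDerivAt (fun x : ℝ => Real.exp x * H2 x)
        (Real.exp s * H2 s + Real.exp s * (-(g2 s))) s := e2.mul (hH2d s hs)
    have := (t1.add t2).add (((t3.add t4)).const_mul (1/2 : ℝ))
    refine this.congr_deriv ?_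
    have hx := Real.exp_ne_zero s
    simp only [hF'_def, hg1_def, hg2_def, Real.exp_neg]
    field_simp
    ring
  -- derivative of F'
  have hF'd : ∀ s ∈ Set.Ioo a b, HasDerivAt F' (F s - h s) s := by
    intro s hs
    have e1 : HasDerivAt (fun x : ℝ => -(Real.exp (-x))) (Real.exp (-s)) s := by
      simpa [Pi.neg_def] using ((hasDerivAt_id s).neg.exp.neg)
    have e2 : HasDerivAt (fun x : ℝ => Real.exp x) (Real.exp s) s := Real.hasDerivAt_exp s
    have t1 : HasDerivAt (fun x : ℝ => Ap * Real.exp (x - b)) (Ap * Real.exp (s - b)) s := by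
      simpa using (((hasDerivAt_id s).sub_const b).exp.const_mul Ap)
    have t2 : HasDerivAt (fun x : ℝ => Am * Real.exp (-x + a)) (-(Am * Real.exp (-s + a))) s := by
      have := (((hasDerivAt_id s).neg.add_const a).exp.const_mul Am)
      refine this.congr_deriv ?_
      simp only [Pi.neg_apply, id_eq]
      ring
    have t3 : HasDerivAt (fun x : ℝ => -(Real.exp (-x)) * H1 x)
        (Real.exp (-s) * H1 s + -(Real.exp (-s)) * g1 s) s := e1.mul (hH1d s hs)
    have t4 : HasDerivAt (fun x : ℝ => Real.exp x * H2 x)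
        (Real.exp s * H2 s + Real.exp s * (-(g2 s))) s := e2.mul (hH2d s hs)
    have := (t1.sub t2).add (((t3.add t4)).const_mul (1/2 : ℝ))
    refine this.congr_deriv ?_
    have hx := Real.exp_ne_zero s
    simp only [hF_def, hg1_def, hg2_def, Real.exp_neg]
    field_simp
    ring
  -- continuity of H1, H2, F on Icc
  have hH1c : ContinuousOn H1 (Set.Icc a b) := by
    have := intervalIntegral.continuousOn_primitive_interval
      (f := g1) (μ := MeasureTheory.volume) (a := a) (b := b)
      (by rw [huIcc]; exact hg1c.integrableOn_Icc)
    rwa [huIcc] at this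
  have hH2c : ContinuousOn H2 (Set.Icc a b) := by
    have := intervalIntegral.continuousOn_primitive_interval_left
      (f := g2) (μ := MeasureTheory.volume) (a := a) (b := b)
      (by rw [huIcc]; exact hg2c.integrableOn_Icc)
    rwa [huIcc] at this
  have hFc : ContinuousOn F (Set.Icc a b) := by
    apply ContinuousOn.add
    apply ContinuousOn.add
    · exact (continuous_const.mul (Real.continuous_exp.comp
        (continuous_id.sub continuous_const))).continuousOn
    · exact (continuous_const.mul (Real.continuous_exp.comp
        ((continuous_id.neg).add continuous_const))).continuousOn
    · exact continuousOn_const.mul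
        ((((Real.continuous_exp.comp continuous_neg).continuousOn).mul hH1c).add
          ((Real.continuous_exp.continuousOn).mul hH2c))
  -- boundary values
  have hH1b : 0 ≤ H1 b := by
    apply intervalIntegral.integral_nonneg hY
    intro u hu
    exact mul_nonneg (Real.exp_pos _).le (hhpos u hu)
  have hH2a : 0 ≤ H2 a := by
    apply intervalIntegral.integral_nonneg hY
    intro u hu
    exact mul_nonneg (Real.exp_pos _).le (hhpos u hu)
  have hH2b : H2 b = 0 := intervalIntegral.integral_same
  have hH1a : H1 a = 0 := intervalIntegral.integral_same
  have hwb : th b - F b ≤ 0 := by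
    simp only [hF_def, hH2b, hH1a, sub_self, Real.exp_zero]
    nlinarith [Real.exp_pos (-b + a), Real.exp_pos (-b),
      mul_nonneg (Real.exp_pos (-b)).le hH1b]
  have hwa : th a - F a ≤ 0 := by
    simp only [hF_def, hH2b, hH1a, sub_self, neg_add_cancel, Real.exp_zero, mul_zero,
      mul_one, add_zero, zero_add]
    nlinarith [Real.exp_pos (a - b), Real.exp_pos a,
      mul_nonneg (Real.exp_pos a).le hH2a]
  -- maximum principle
  have key := max_principle_aux a b (fun s => th s - F s) (fun s => th' s - F' s)
    (fun s => th'' s - (F s - h s)) hY (hthc.sub hFc)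
    (fun s hs => (hd1 s hs).sub (hFd s hs))
    (fun s hs => (hd2 s hs).sub (hF'd s hs))
    (fun s hs => by have := hineq s hs; linarith)
    hwa hwb
  intro s hs
  have hw := key s hs
  -- identify the RHS with F s
  have hk : ∀ u v, u ∈ Set.Icc a b → v ∈ Set.Icc a b →
      IntervalIntegrable (fun q => Real.exp (-|s - q|) * h q) MeasureTheory.volume u v := by
    intro u v hu hv
    apply ContinuousOn.intervalIntegrable
    apply ContinuousOn.mul
    · exact (Real.continuous_exp.comp ((continuous_const.sub continuous_id).abs).neg).continuousOn
    · exact hhc.mono ((Set.uIcc_subset_uIcc (by rw [huIcc]; exact hu)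
        (by rw [huIcc]; exact hv)).trans huIcc.subset)
  have hsplit : (∫ q in a..s, Real.exp (-|s - q|) * h q) +
      (∫ q in s..b, Real.exp (-|s - q|) * h q) = ∫ q in a..b, Real.exp (-|s - q|) * h q :=
    intervalIntegral.integral_add_adjacent_intervals
      (hk a s (Set.left_mem_Icc.2 hY) hs) (hk s b hs (Set.right_mem_Icc.2 hY))
  have e1 : (∫ q in a..s, Real.exp (-|s - q|) * h q) = Real.exp (-s) * H1 s := by
    simp only [hH1_def, hg1_def]
    rw [← intervalIntegral.integral_const_mul]
    apply intervalIntegral.integral_congr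
    intro q hq
    rw [Set.uIcc_of_le hs.1] at hq
    show Real.exp (-|s - q|) * h q = Real.exp (-s) * (Real.exp q * h q)
    rw [abs_of_nonneg (by linarith [hq.2] : (0:ℝ) ≤ s - q),
      show -(s - q) = q + -s by ring, Real.exp_add]
    ring
  have e2 : (∫ q in s..b, Real.exp (-|s - q|) * h q) = Real.exp s * H2 s := by
    simp only [hH2_def, hg2_def]
    rw [← intervalIntegral.integral_const_mul]
    apply intervalIntegral.integral_congr
    intro q hq
    rw [Set.uIcc_of_le hs.2] at hq
    show Real.exp (-|s - q|) * h q = Real.exp s * (Real.exp (-q) * h q)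
    rw [abs_of_nonpos (by linarith [hq.1] : s - q ≤ 0),
      show -(-(s - q)) = s + -q by ring, Real.exp_add]
    ring
  have hRHS : Ap * Real.exp (s - Yp) + Am * Real.exp (-s - Ym) +
      (1 / 2) * (∫ q in (-Ym)..Yp, Real.exp (-|s - q|) * h q) = F s := by
    rw [show (∫ q in (-Ym)..Yp, Real.exp (-|s - q|) * h q)
        = ∫ q in a..b, Real.exp (-|s - q|) * h q from rfl]
    rw [← hsplit, e1, e2]
    simp only [hF_def]
    rw [show (-s - Ym : ℝ) = -s + a from by rw [ha_def]; ring]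
  rw [hRHS]
  linarith
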